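/- Let p be an odd prime, let ε ∈ 𝔽_p be a non-square, and let M ∈ M₂(ℤ) be an integer matrix such that tr(M)² − 4·det(M) is a non-square modulo p (equivalently, the characteristic polynomial of M is irreducible modulo p). Then there exists A ∈ SL₂(ℤ) such that the reduction of A·M·A⁻¹ modulo p lies in C_ns^ε(p), i.e. has the form (a b; εb a) with a, b ∈ 𝔽_p. -/

import Mathlib

open Matrix

/-- The Cartan non-split ring mod `p`: the set of matrices `(a b; c d)` over `𝔽_p`
with `a = d` and `c = ε * b`. -/
def CnsSet (p : ℕ) (ε : ZMod p) : Set (Matrix (Fin 2) (Fin 2) (ZMod p)) :=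
  {A | A 0 0 = A 1 1 ∧ A 1 0 = ε * A 0 1}

/-- `Matrix.map` of an explicit `2×2` matrix. -/
lemma map_fin_two {α β : Type*} (f : α → β) (a b c d : α) :
    (!![a, b; c, d]).map f = !![f a, f b; f c, f d] := by
  ext i j
  fin_cases i <;> fin_cases j <;> simp

/-- Surjectivity of the norm form `u² - ε v²` on `𝔽_p`. -/
lemma norm_form_surj (p : ℕ) [Fact p.Prime] (hp : Odd p) (ε : ZMod p) (hε : ε ≠ 0)
    (s : ZMod p) : ∃ u v : ZMod p, u ^ 2 - ε * v ^ 2 = s := by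
  have hcard : Fintype.card (ZMod p) % 2 = 1 := by
    rw [ZMod.card]; exact Nat.odd_iff.mp hp
  obtain ⟨u, v, huv⟩ := FiniteField.exists_root_sum_quadratic
    (f := Polynomial.X ^ 2 + Polynomial.C (-s)) (g := Polynomial.C (-ε) * Polynomial.X ^ 2)
    (by rw [Polynomial.C_neg, ← sub_eq_add_neg, Polynomial.degree_X_pow_sub_C (by norm_num) s]; rfl)
    (by simpa using Polynomial.degree_C_mul_X_pow 2 (neg_ne_zero.mpr hε)) hcard
  refine ⟨u, v, ?_⟩
  simp only [Polynomial.eval_add, Polynomial.eval_pow, Polynomial.eval_X, Polynomial.eval_C,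
    Polynomial.eval_mul, Polynomial.eval_neg] at huv
  linear_combination huv

/-- The product of two non-squares in `𝔽_p` is a square. -/
lemma nonsquare_mul_nonsquare (p : ℕ) [Fact p.Prime] (a b : ZMod p)
    (ha : ¬ IsSquare a) (hb : ¬ IsSquare b) : IsSquare (a * b) := by
  have ha0 : a ≠ 0 := fun h => ha (h ▸ IsSquare.zero)
  have hb0 : b ≠ 0 := fun h => hb (h ▸ IsSquare.zero)
  have hab : a * b ≠ 0 := mul_ne_zero ha0 hb0
  rw [← quadraticChar_one_iff_isSquare hab, _root_.map_mul,
    quadraticChar_neg_one_iff_not_isSquare.mpr ha,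
    quadraticChar_neg_one_iff_not_isSquare.mpr hb]
  ring

/-- A `2×2` matrix over `ℤ/p` of determinant one with nonzero lower-left entry lifts to
`SL₂(ℤ)`. -/
lemma lift_of_ne_zero (p : ℕ) [Fact p.Prime] (a b c d : ZMod p) (hc : c ≠ 0)
    (hdet : a * d - b * c = 1) :
    ∃ A : Matrix.SpecialLinearGroup (Fin 2) ℤ,
      (A : Matrix (Fin 2) (Fin 2) ℤ).map (fun x : ℤ => (x : ZMod p)) = !![a, b; c, d] := by
  obtain ⟨u, hu⟩ : ∃ u : ZMod p, u = (a - 1) * c⁻¹ := ⟨_, rfl⟩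
  obtain ⟨v, hv⟩ : ∃ v : ZMod p, v = (d - 1) * c⁻¹ := ⟨_, rfl⟩
  set U : ℤ := (u.val : ℤ)
  set V : ℤ := (v.val : ℤ)
  set W : ℤ := (c.val : ℤ)
  have hU : ((U : ℤ) : ZMod p) = u := by simp [U, ZMod.natCast_val, ZMod.cast_id]
  have hV : ((V : ℤ) : ZMod p) = v := by simp [V, ZMod.natCast_val, ZMod.cast_id]
  have hW : ((W : ℤ) : ZMod p) = c := by simp [W, ZMod.natCast_val, ZMod.cast_id]
  have h1 : (1 : ZMod p) + u * c = a := by rw [hu, mul_assoc, inv_mul_cancel₀ hc]; ring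
  have h2 : c * v + 1 = d := by rw [hv, mul_comm c, mul_assoc, inv_mul_cancel₀ hc]; ring
  have h3 : v * (1 + u * c) + u = b := by
    rw [h1, hu, hv]
    have hbb : b = b * c * c⁻¹ := by rw [mul_assoc, mul_inv_cancel₀ hc, mul_one]
    linear_combination c⁻¹ * hdet - hbb
  refine ⟨⟨!![1 + U * W, V * (1 + U * W) + U; W, W * V + 1], by
    simp [Matrix.det_fin_two_of]; ring⟩, ?_⟩
  rw [Matrix.SpecialLinearGroup.coe_mk, map_fin_two]
  have e00 : ((1 + U * W : ℤ) : ZMod p) = a := by push_cast [hU, hW]; exact h1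
  have e01 : ((V * (1 + U * W) + U : ℤ) : ZMod p) = b := by push_cast [hU, hV, hW]; exact h3
  have e11 : ((W * V + 1 : ℤ) : ZMod p) = d := by push_cast [hV, hW]; exact h2
  rw [e00, e01, hW, e11]

/-- Surjectivity of the reduction `SL₂(ℤ) → SL₂(ℤ/p)` (stated on raw matrices). -/
lemma SL2_lift (p : ℕ) [Fact p.Prime] (h : Matrix (Fin 2) (Fin 2) (ZMod p))
    (hdet : h.det = 1) :
    ∃ A : Matrix.SpecialLinearGroup (Fin 2) ℤ,
      (A : Matrix (Fin 2) (Fin 2) ℤ).map (fun x : ℤ => (x : ZMod p)) = h := by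
  obtain ⟨a, ha⟩ : ∃ a, a = h 0 0 := ⟨_, rfl⟩
  obtain ⟨b, hb⟩ : ∃ b, b = h 0 1 := ⟨_, rfl⟩
  obtain ⟨c, hc⟩ : ∃ c, c = h 1 0 := ⟨_, rfl⟩
  obtain ⟨d, hd⟩ : ∃ d, d = h 1 1 := ⟨_, rfl⟩
  have hdd : a * d - b * c = 1 := by
    rw [ha, hb, hc, hd, ← Matrix.det_fin_two, hdet]
  have heta : h = !![a, b; c, d] := by
    rw [ha, hb, hc, hd]; exact Matrix.eta_fin_two h
  by_cases hc0 : c ≠ 0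
  · obtain ⟨A, hA⟩ := lift_of_ne_zero p a b c d hc0 hdd
    exact ⟨A, by rw [hA, heta]⟩
  · push_neg at hc0
    have hdne : d ≠ 0 := by
      intro h0
      rw [hc0, h0] at hdd; simp at hdd
    obtain ⟨A, hA⟩ := lift_of_ne_zero p (a + b) b d d hdne (by linear_combination hdd + b * hc0)
    refine ⟨A * ⟨!![1, 0; -1, 1], by simp [Matrix.det_fin_two_of]⟩, ?_⟩
    have hcoe : ((A * ⟨!![1, 0; -1, 1], by simp [Matrix.det_fin_two_of]⟩ :
        Matrix.SpecialLinearGroup (Fin 2) ℤ) : Matrix (Fin 2) (Fin 2) ℤ)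
        = (A : Matrix (Fin 2) (Fin 2) ℤ) * !![1, 0; -1, 1] := rfl
    rw [hcoe, show (fun x : ℤ => (x : ZMod p)) = ⇑(Int.castRingHom (ZMod p)) from rfl,
      Matrix.map_mul]
    rw [show ((A : Matrix (Fin 2) (Fin 2) ℤ).map ⇑(Int.castRingHom (ZMod p))) = !![a + b, b; d, d]
      from hA, heta, map_fin_two]
    ext i j
    fin_cases i <;> fin_cases j <;>
      simp [Matrix.mul_apply, Fin.sum_univ_two, hc0]

/-- An integer matrix whose characteristic polynomial is irreducible modulo `p`
(i.e. whose discriminant `tr(M)² - 4·det(M)` is a non-square mod `p`) can be conjugated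
by an element of `SL₂(ℤ)` into the Cartan non-split ring modulo `p`. -/
theorem conj_into_cartan (p : ℕ) [Fact p.Prime] (hp : Odd p)
    (ε : ZMod p) (hε : ¬ IsSquare ε) (M : Matrix (Fin 2) (Fin 2) ℤ)
    (hM : ¬ IsSquare ((M.trace ^ 2 - 4 * M.det : ℤ) : ZMod p)) :
    ∃ A : Matrix.SpecialLinearGroup (Fin 2) ℤ,
      (((A : Matrix (Fin 2) (Fin 2) ℤ) * M * ((A⁻¹ : Matrix.SpecialLinearGroup (Fin 2) ℤ)
          : Matrix (Fin 2) (Fin 2) ℤ)).map (fun x : ℤ => (x : ZMod p)))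
        ∈ CnsSet p ε := by
  have h2 : (2 : ZMod p) ≠ 0 := by
    intro h0
    have h2' : ((2 : ℕ) : ZMod p) = 0 := by exact_mod_cast h0
    have hdvd := (ZMod.natCast_eq_zero_iff 2 p).mp h2'
    have hpp : p.Prime := Fact.out
    have := (Nat.prime_dvd_prime_iff_eq hpp Nat.prime_two).mp hdvd
    rw [this] at hp
    simp [Nat.odd_iff] at hp
  have hε0 : ε ≠ 0 := fun h => hε (h ▸ IsSquare.zero)
  obtain ⟨a, ha⟩ : ∃ a : ZMod p, a = ((M 0 0 : ℤ) : ZMod p) := ⟨_, rfl⟩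
  obtain ⟨b, hb⟩ : ∃ b : ZMod p, b = ((M 0 1 : ℤ) : ZMod p) := ⟨_, rfl⟩
  obtain ⟨c, hc⟩ : ∃ c : ZMod p, c = ((M 1 0 : ℤ) : ZMod p) := ⟨_, rfl⟩
  obtain ⟨d, hd⟩ : ∃ d : ZMod p, d = ((M 1 1 : ℤ) : ZMod p) := ⟨_, rfl⟩
  obtain ⟨D, hD⟩ : ∃ D : ZMod p, D = (a + d) ^ 2 - 4 * (a * d - b * c) := ⟨_, rfl⟩
  have hDns : ¬ IsSquare D := by
    have : ((M.trace ^ 2 - 4 * M.det : ℤ) : ZMod p) = D := by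
      rw [Matrix.trace_fin_two, Matrix.det_fin_two, hD, ha, hb, hc, hd]; push_cast; ring
    rwa [this] at hM
  have hD0 : D ≠ 0 := fun h => hDns (h ▸ IsSquare.zero)
  have hcne : c ≠ 0 := by
    intro h0
    exact hDns ⟨a - d, by rw [hD]; linear_combination (4 * b) * h0⟩
  obtain ⟨τ, hτ⟩ := nonsquare_mul_nonsquare p D ε hDns hε
  have hτ0 : τ ≠ 0 := by
    intro h0; rw [h0] at hτ; exact mul_ne_zero hD0 hε0 (by simpa using hτ)
  obtain ⟨x, hx⟩ : ∃ x : ZMod p, x = (a + d) * 2⁻¹ := ⟨_, rfl⟩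
  obtain ⟨y, hy⟩ : ∃ y : ZMod p, y = τ * (2 * ε)⁻¹ := ⟨_, rfl⟩
  have hy0 : y ≠ 0 := by
    rw [hy]
    exact mul_ne_zero hτ0 (inv_ne_zero (mul_ne_zero h2 hε0))
  have R1 : 2 * x = a + d := by rw [hx]; field_simp
  have ht : (2 * ε) * y = τ := by
    rw [hy, mul_comm τ, ← mul_assoc, mul_inv_cancel₀ (mul_ne_zero h2 hε0), one_mul]
  have hsq : 4 * ε ^ 2 * y ^ 2 = D * ε := by
    linear_combination ((2 * ε) * y + τ) * ht - hτ
  have R2' : 4 * (ε * y ^ 2) = D := by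
    apply mul_right_cancel₀ hε0
    linear_combination hsq
  have R2 : 4 * (ε * y ^ 2) = (a - d) ^ 2 + 4 * (b * c) := by
    rw [R2', hD]; ring
  have h4 : (4 : ZMod p) ≠ 0 := by
    have : (4 : ZMod p) = 2 * 2 := by norm_num
    rw [this]; exact mul_ne_zero h2 h2
  have R4 : ε * y ^ 2 = (a + d) * x - x ^ 2 - (a * d - b * c) := by
    apply mul_left_cancel₀ h4
    linear_combination R2 + (2 * x - a - d) * R1
  obtain ⟨u, v, huv⟩ := norm_form_surj p hp ε hε0 ((c * (ε * y))⁻¹)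
  have hcεy : c * (ε * y) ≠ 0 := mul_ne_zero hcne (mul_ne_zero hε0 hy0)
  set h : Matrix (Fin 2) (Fin 2) (ZMod p) :=
    !![u * c, u * (x - a) + v * (ε * y); ε * v * c, ε * v * (x - a) + u * (ε * y)] with hh
  have hdeth : h.det = 1 := by
    rw [hh, Matrix.det_fin_two_of,
      show u * c * (ε * v * (x - a) + u * (ε * y)) -
        (u * (x - a) + v * (ε * y)) * (ε * v * c) = (u ^ 2 - ε * v ^ 2) * (c * (ε * y)) by ring,
      huv, inv_mul_cancel₀ hcεy]
  set C : Matrix (Fin 2) (Fin 2) (ZMod p) := !![x, y; ε * y, x] with hC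
  have hint : h * !![a, b; c, d] = C * h := by
    rw [hh, hC]
    ext i j
    fin_cases i <;> fin_cases j <;>
      simp [Matrix.mul_apply, Fin.sum_univ_two]
    · ring
    · linear_combination (-u) * R4 + (-(v * ε * y)) * R1
    · ring
    · linear_combination (-(ε * v)) * R4 + (-(u * ε * y)) * R1
  obtain ⟨A, hA⟩ := SL2_lift p h hdeth
  refine ⟨A, ?_⟩
  have hmap : (((A : Matrix (Fin 2) (Fin 2) ℤ) * M * ((A⁻¹ : Matrix.SpecialLinearGroup (Fin 2) ℤ)
      : Matrix (Fin 2) (Fin 2) ℤ)).map (fun x : ℤ => (x : ZMod p))) = C := by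
    rw [Matrix.SpecialLinearGroup.coe_inv,
      show (fun x : ℤ => (x : ZMod p)) = ⇑(Int.castRingHom (ZMod p)) from rfl,
      Matrix.map_mul, Matrix.map_mul]
    have hadj : ((A : Matrix (Fin 2) (Fin 2) ℤ).adjugate.map ⇑(Int.castRingHom (ZMod p)))
        = h.adjugate := by
      rw [← RingHom.mapMatrix_apply, RingHom.map_adjugate, RingHom.mapMatrix_apply,
        show ((A : Matrix (Fin 2) (Fin 2) ℤ).map ⇑(Int.castRingHom (ZMod p))) = h from hA]
    have hMmap : (M.map ⇑(Int.castRingHom (ZMod p))) = !![a, b; c, d] := by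
      rw [Matrix.eta_fin_two (M.map ⇑(Int.castRingHom (ZMod p)))]
      simp only [Matrix.map_apply, Int.coe_castRingHom]
      rw [← ha, ← hb, ← hc, ← hd]
    rw [hadj, hMmap,
      show ((A : Matrix (Fin 2) (Fin 2) ℤ).map ⇑(Int.castRingHom (ZMod p))) = h from hA,
      mul_assoc, ← mul_assoc h, hint, mul_assoc, Matrix.mul_adjugate, hdeth]
    simp
  rw [hmap, hC]
  constructor <;> simp [CnsSet]
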